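/- For any s ≤ 0 and m ≤ 0, the function F(P_{T|X}, Q_{T,Y}, Q_A) is jointly convex in its three arguments, i.e., jointly convex over the product of the convex set of conditional pmfs P_{T|X}, the simplex of pmfs Q_{T,Y} on 𝒯 × 𝒴, and the simplex of pmfs Q_A on 𝒜. -/

import Mathlib

open Finset

noncomputable section

/-- A probability mass function on a finite alphabet. -/
def IsPMF {α : Type} [Fintype α] (p : α → ℝ) : Prop :=
  (∀ a, 0 ≤ p a) ∧ ∑ a, p a = 1

/-- A conditional probability mass function. -/
def IsCondPMF {α β : Type} [Fintype α] [Fintype β] (p : α → β → ℝ) : Prop :=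
  ∀ a, IsPMF (p a)

/-- A Shannon strategy: an estimate function `Y → Xh` together with an action in `A`. -/
abbrev Strat (Y Xh A : Type) : Type := (Y → Xh) × A

variable {X Y A Xh : Type} [Fintype X] [Fintype Y] [Fintype A] [Fintype Xh]
  [DecidableEq X] [DecidableEq Y] [DecidableEq A] [DecidableEq Xh]


/-- Joint pmf `P_{X,Y,T}(x,y,t) = P_X(x) P_{T|X}(t|x) P_{Y|X,A}(y|x,a(t))`. -/
def pXYT (PX : X → ℝ) (PW : A → X → Y → ℝ) (PT : X → Strat Y Xh A → ℝ)
    (x : X) (y : Y) (t : Strat Y Xh A) : ℝ :=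
  PX x * PT x t * PW t.2 x y

/-- Action marginal `P_A`. -/
def pA (PX : X → ℝ) (PT : X → Strat Y Xh A → ℝ) (a : A) : ℝ :=
  ∑ x, ∑ t, if t.2 = a then PX x * PT x t else 0

/-- Marginal `P_{X,A}`. -/
def pXA (PX : X → ℝ) (PT : X → Strat Y Xh A → ℝ) (x : X) (a : A) : ℝ :=
  ∑ t, if t.2 = a then PX x * PT x t else 0

/-- Marginal `P_{Y,A}`. -/
def pYA (PX : X → ℝ) (PW : A → X → Y → ℝ) (PT : X → Strat Y Xh A → ℝ)
    (y : Y) (a : A) : ℝ :=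
  ∑ x, ∑ t, if t.2 = a then pXYT PX PW PT x y t else 0

/-- Marginal `P_{X,Y,A}`. -/
def pXYA (PX : X → ℝ) (PW : A → X → Y → ℝ) (PT : X → Strat Y Xh A → ℝ)
    (x : X) (y : Y) (a : A) : ℝ :=
  ∑ t, if t.2 = a then pXYT PX PW PT x y t else 0

/-- Marginal `P_{Y,T}`. -/
def pYT (PX : X → ℝ) (PW : A → X → Y → ℝ) (PT : X → Strat Y Xh A → ℝ)
    (y : Y) (t : Strat Y Xh A) : ℝ :=
  ∑ x, pXYT PX PW PT x y t

/-- Mutual information `I(X; a(T))` (base-2 logarithms). -/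
def IXA (PX : X → ℝ) (PT : X → Strat Y Xh A → ℝ) : ℝ :=
  ∑ x, ∑ a, pXA PX PT x a * Real.logb 2 (pXA PX PT x a / (PX x * pA PX PT a))

/-- Conditional mutual information `I(X; T | Y, a(T))` (base-2 logarithms). -/
def IXTcondYA (PX : X → ℝ) (PW : A → X → Y → ℝ) (PT : X → Strat Y Xh A → ℝ) : ℝ :=
  ∑ x, ∑ y, ∑ t, pXYT PX PW PT x y t *
    Real.logb 2 (pXYT PX PW PT x y t * pYA PX PW PT y t.2 /
      (pXYA PX PW PT x y t.2 * pYT PX PW PT y t))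

/-- Average distortion `E[d(X, T(Y))]`. -/
def expDist (PX : X → ℝ) (PW : A → X → Y → ℝ) (dist : X → Xh → ℝ)
    (PT : X → Strat Y Xh A → ℝ) : ℝ :=
  ∑ x, ∑ y, ∑ t, pXYT PX PW PT x y t * dist x (t.1 y)

/-- Average action cost `E[Δ(a(T))]`. -/
def expCost (PX : X → ℝ) (cost : A → ℝ) (PT : X → Strat Y Xh A → ℝ) : ℝ :=
  ∑ x, ∑ t, PX x * PT x t * cost t.2

/-- The rate-distortion-cost function in the Shannon-strategy formulation. -/
def RDC (PX : X → ℝ) (PW : A → X → Y → ℝ) (dist : X → Xh → ℝ) (cost : A → ℝ)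
    (D C : ℝ) : ℝ :=
  sInf { r : ℝ | ∃ PT : X → Strat Y Xh A → ℝ, IsCondPMF PT ∧
    expDist PX PW dist PT ≤ D ∧ expCost PX cost PT ≤ C ∧
    r = IXA PX PT + IXTcondYA PX PW PT }
/-- A single Kullback–Leibler summand `p log₂(p/q)` with the conventions
`0 · log(0/q) = 0` and `p log(p/0) = +∞` for `p > 0`, valued in the extended reals. -/
def klTerm (p q : ℝ) : EReal :=
  if p = 0 then 0 else if q = 0 then ⊤ else ((p * Real.logb 2 (p / q) : ℝ) : EReal)

/-- Conditional joint pmf `P_{Y,T|X}(y,t|x) = P_{T|X}(t|x) P_{Y|X,A}(y|x,a(t))`. -/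
def pYTgivenX (PW : A → X → Y → ℝ) (PT : X → Strat Y Xh A → ℝ)
    (x : X) (y : Y) (t : Strat Y Xh A) : ℝ :=
  PT x t * PW t.2 x y

/-- The Blahut–Arimoto functional
`F(P_{T|X}, Q_{T,Y}, Q_A) = D_KL(P_{Y,A}‖Q_A) − Σ P_{X,Y,T} log₂ P_{Y|X,A}`
`+ Σ_x P_X(x) D_KL(P_{Y,T|X}(·,·|x)‖Q_{T,Y}) − s E[d(X,T(Y))] − m E[Δ(a(T))]`,
valued in the extended reals (base-2 logarithms). -/
def Ffun (PX : X → ℝ) (PW : A → X → Y → ℝ) (dist : X → Xh → ℝ) (cost : A → ℝ)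
    (s m : ℝ) (PT : X → Strat Y Xh A → ℝ) (QTY : Strat Y Xh A × Y → ℝ)
    (QA : A → ℝ) : EReal :=
  (∑ y, ∑ a, klTerm (pYA PX PW PT y a) (QA a))
  + (((- ∑ x, ∑ y, ∑ t, pXYT PX PW PT x y t * Real.logb 2 (PW t.2 x y) : ℝ)) : EReal)
  + (∑ x, ((PX x : ℝ) : EReal) * ∑ t, ∑ y, klTerm (pYTgivenX PW PT x y t) (QTY (t, y)))
  + ((- s * expDist PX PW dist PT - m * expCost PX cost PT : ℝ) : EReal)
def klReal (p q : ℝ) : ℝ := if p = 0 then 0 else p * Real.logb 2 (p / q)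

lemma klReal_mono {p q q' : ℝ} (hp : 0 ≤ p) (hq' : p ≠ 0 → 0 < q') (h : q' ≤ q) :
    klReal p q ≤ klReal p q' := by
  by_cases hp0 : p = 0
  · simp [klReal, hp0]
  · have hq'0 := hq' hp0
    have hP : 0 < p := lt_of_le_of_ne hp (Ne.symm hp0)
    simp only [klReal, if_neg hp0]
    refine mul_le_mul_of_nonneg_left ?_ hp
    exact Real.logb_le_logb_of_le one_lt_two (div_pos hP (lt_of_lt_of_le hq'0 h))
      (div_le_div_of_nonneg_left hp hq'0 h)

lemma klReal_add_le {p p' q q' : ℝ} (hp : 0 ≤ p) (hp' : 0 ≤ p') (hq : 0 ≤ q) (hq' : 0 ≤ q')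
    (h1 : p ≠ 0 → q ≠ 0) (h2 : p' ≠ 0 → q' ≠ 0) :
    klReal (p + p') (q + q') ≤ klReal p q + klReal p' q' := by
  by_cases hp0 : p = 0
  · subst hp0
    rw [zero_add, show klReal 0 q = 0 by simp [klReal], zero_add]
    exact klReal_mono hp' (fun h => lt_of_le_of_ne hq' (Ne.symm (h2 h))) (by linarith)
  · by_cases hp'0 : p' = 0
    · subst hp'0
      rw [add_zero, show klReal 0 q' = 0 by simp [klReal], add_zero]
      exact klReal_mono hp (fun h => lt_of_le_of_ne hq (Ne.symm (h1 h))) (by linarith)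
    · have hq0 : 0 < q := lt_of_le_of_ne hq (Ne.symm (h1 hp0))
      have hq'0 : 0 < q' := lt_of_le_of_ne hq' (Ne.symm (h2 hp'0))
      have hP : 0 < p := lt_of_le_of_ne hp (Ne.symm hp0)
      have hP' : 0 < p' := lt_of_le_of_ne hp' (Ne.symm hp'0)
      have hS : 0 < q + q' := by linarith
      have key : (p + p') * Real.log ((p + p') / (q + q')) ≤
          p * Real.log (p / q) + p' * Real.log (p' / q') := by
        have hcv := Real.convexOn_mul_log.2 (Set.mem_Ici.2 (le_of_lt (div_pos hP hq0)))
          (Set.mem_Ici.2 (le_of_lt (div_pos hP' hq'0)))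
          (le_of_lt (div_pos hq0 hS)) (le_of_lt (div_pos hq'0 hS))
          (by field_simp)
        simp only [smul_eq_mul] at hcv
        have e1 : q / (q + q') * (p / q) + q' / (q + q') * (p' / q') = (p + p') / (q + q') := by
          field_simp
        rw [e1] at hcv
        have h3 := mul_le_mul_of_nonneg_left hcv hS.le
        calc (p + p') * Real.log ((p + p') / (q + q'))
            = (q + q') * ((p + p') / (q + q') * Real.log ((p + p') / (q + q'))) := by
              field_simp
          _ ≤ (q + q') * (q / (q + q') * (p / q * Real.log (p / q)) +
              q' / (q + q') * (p' / q' * Real.log (p' / q'))) := h3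
          _ = p * Real.log (p / q) + p' * Real.log (p' / q') := by field_simp
      have hl2 : 0 < Real.log 2 := Real.log_pos one_lt_two
      simp only [klReal, if_neg hp0, if_neg hp'0, if_neg (by positivity : p + p' ≠ 0),
        Real.logb, ← mul_div_assoc, ← add_div]
      exact div_le_div_of_nonneg_right key hl2.le

lemma klReal_smul {c : ℝ} (hc : 0 ≤ c) (p q : ℝ) : klReal (c*p) (c*q) = c * klReal p q := by
  rcases hc.eq_or_lt with h|h
  · simp [klReal, ← h]
  · by_cases hp : p = 0
    · simp [klReal, hp]
    · have hcp : c * p ≠ 0 := mul_ne_zero h.ne' hp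
      simp only [klReal, if_neg hp, if_neg hcp, mul_div_mul_left _ _ h.ne']
      ring

lemma klReal_combo {a b p₁ p₂ q₁ q₂ : ℝ} (ha : 0 ≤ a) (hb : 0 ≤ b)
    (hp₁ : 0 ≤ p₁) (hp₂ : 0 ≤ p₂) (hq₁ : 0 ≤ q₁) (hq₂ : 0 ≤ q₂)
    (h1 : p₁ ≠ 0 → q₁ ≠ 0) (h2 : p₂ ≠ 0 → q₂ ≠ 0) :
    klReal (a*p₁+b*p₂) (a*q₁+b*q₂) ≤ a * klReal p₁ q₁ + b * klReal p₂ q₂ := by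
  calc klReal (a*p₁+b*p₂) (a*q₁+b*q₂) ≤ klReal (a*p₁) (a*q₁) + klReal (b*p₂) (b*q₂) :=
      klReal_add_le (by positivity) (by positivity) (by positivity) (by positivity)
        (fun h => by
          rcases mul_ne_zero_iff.1 h with ⟨h3, h4⟩; exact mul_ne_zero h3 (h1 h4))
        (fun h => by
          rcases mul_ne_zero_iff.1 h with ⟨h3, h4⟩; exact mul_ne_zero h3 (h2 h4))
    _ = _ := by rw [klReal_smul ha, klReal_smul hb]

lemma klTerm_ne_bot (p q : ℝ) : klTerm p q ≠ ⊥ := by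
  unfold klTerm; split_ifs <;> simp [← EReal.coe_mul]

lemma klTerm_eq_coe {p q : ℝ} (h : p ≠ 0 → q ≠ 0) :
    klTerm p q = ((klReal p q : ℝ) : EReal) := by
  by_cases h1 : p = 0
  · simp [klTerm, klReal, h1]
  · simp [klTerm, klReal, h1, h h1]

lemma klTerm_cond {p q : ℝ} (h : klTerm p q ≠ ⊤) : p ≠ 0 → q ≠ 0 := by
  intro hp hq; exact h (by simp [klTerm, hp, hq])

lemma esum_ne_bot {ι : Type*} (s : Finset ι) (f : ι → EReal) (h : ∀ i ∈ s, f i ≠ ⊥) :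
    ∑ i ∈ s, f i ≠ ⊥ := by
  induction s using Finset.cons_induction with
  | empty => simp
  | cons a s ha ih =>
    rw [Finset.sum_cons, Ne, EReal.add_eq_bot_iff]
    push_neg
    exact ⟨h a (Finset.mem_cons_self a s), ih fun i hi => h i (Finset.mem_cons_of_mem hi)⟩

lemma esum_ne_top {ι : Type*} (s : Finset ι) (f : ι → EReal) (hb : ∀ i ∈ s, f i ≠ ⊥)
    (h : ∑ i ∈ s, f i ≠ ⊤) : ∀ i ∈ s, f i ≠ ⊤ := by
  induction s using Finset.cons_induction with
  | empty => simp
  | cons a s ha ih =>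
    rw [Finset.sum_cons] at h
    have hrb : ∑ i ∈ s, f i ≠ ⊥ := esum_ne_bot _ _ (fun i hi => hb i (Finset.mem_cons_of_mem hi))
    have hfa : f a ≠ ⊤ := fun hfa => h (by rw [hfa, EReal.top_add_of_ne_bot hrb])
    have hrt : ∑ i ∈ s, f i ≠ ⊤ :=
      fun hrt => h (by rw [hrt, EReal.add_top_of_ne_bot (hb a (Finset.mem_cons_self a s))])
    intro i hi
    rcases Finset.mem_cons.1 hi with rfl | hi
    · exact hfa
    · exact ih (fun j hj => hb j (Finset.mem_cons_of_mem hj)) hrt i hi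

lemma ecoe_sum {ι : Type*} (s : Finset ι) (f : ι → ℝ) :
    ((∑ i ∈ s, f i : ℝ) : EReal) = ∑ i ∈ s, ((f i : ℝ) : EReal) :=
  map_sum (⟨⟨Real.toEReal, EReal.coe_zero⟩, EReal.coe_add⟩ : ℝ →+ EReal) f s

lemma coe_mul_ne_bot {c : ℝ} (hc : 0 < c) {x : EReal} (hx : x ≠ ⊥) : (c : EReal) * x ≠ ⊥ := by
  induction x using EReal.rec with
  | bot => exact absurd rfl hx
  | coe r => rw [← EReal.coe_mul]; exact EReal.coe_ne_bot _
  | top => rw [EReal.coe_mul_top_of_pos hc]; simp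

lemma add_parts_ne_top {x y : EReal} (h : x + y ≠ ⊤) (hx : x ≠ ⊥) (hy : y ≠ ⊥) :
    x ≠ ⊤ ∧ y ≠ ⊤ :=
  ⟨fun hx' => h (hx' ▸ EReal.top_add_of_ne_bot hy),
   fun hy' => h (hy' ▸ EReal.add_top_of_ne_bot hx)⟩

section Aux

variable {X Y A Xh : Type} [Fintype X] [Fintype Y] [Fintype A] [Fintype Xh]
  [DecidableEq X] [DecidableEq Y] [DecidableEq A] [DecidableEq Xh]

/-- Real-valued version of `Ffun`. -/
def FfunR (PX : X → ℝ) (PW : A → X → Y → ℝ) (dist : X → Xh → ℝ) (cost : A → ℝ)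
    (s m : ℝ) (PT : X → Strat Y Xh A → ℝ) (QTY : Strat Y Xh A × Y → ℝ)
    (QA : A → ℝ) : ℝ :=
  (∑ y, ∑ a, klReal (pYA PX PW PT y a) (QA a))
  + (- ∑ x, ∑ y, ∑ t, pXYT PX PW PT x y t * Real.logb 2 (PW t.2 x y))
  + (∑ x, PX x * ∑ t, ∑ y, klReal (pYTgivenX PW PT x y t) (QTY (t, y)))
  + (- s * expDist PX PW dist PT - m * expCost PX cost PT)

variable {PX : X → ℝ} {PW : A → X → Y → ℝ} {dist : X → Xh → ℝ} {cost : A → ℝ}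
  {s m : ℝ} {PT : X → Strat Y Xh A → ℝ} {QTY : Strat Y Xh A × Y → ℝ} {QA : A → ℝ}

lemma Ffun_eq_coe (hA : ∀ y c, pYA PX PW PT y c ≠ 0 → QA c ≠ 0)
    (hT : ∀ x y t, pYTgivenX PW PT x y t ≠ 0 → QTY (t, y) ≠ 0) :
    Ffun PX PW dist cost s m PT QTY QA
      = ((FfunR PX PW dist cost s m PT QTY QA : ℝ) : EReal) := by
  unfold Ffun FfunR
  have e1 : (∑ y, ∑ a, klTerm (pYA PX PW PT y a) (QA a))
      = ((∑ y, ∑ a, klReal (pYA PX PW PT y a) (QA a) : ℝ) : EReal) := by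
    rw [ecoe_sum]
    exact Finset.sum_congr rfl fun y _ => by
      rw [ecoe_sum]
      exact Finset.sum_congr rfl fun c _ => klTerm_eq_coe (hA y c)
  have e3 : (∑ x, ((PX x : ℝ) : EReal) * ∑ t, ∑ y, klTerm (pYTgivenX PW PT x y t) (QTY (t, y)))
      = ((∑ x, PX x * ∑ t, ∑ y, klReal (pYTgivenX PW PT x y t) (QTY (t, y)) : ℝ) : EReal) := by
    rw [ecoe_sum]
    refine Finset.sum_congr rfl fun x _ => ?_
    rw [EReal.coe_mul]
    congr 1
    rw [ecoe_sum]
    refine Finset.sum_congr rfl fun t _ => ?_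
    rw [ecoe_sum]
    exact Finset.sum_congr rfl fun y _ => klTerm_eq_coe (hT x y t)
  rw [e1, e3, ← EReal.coe_add, ← EReal.coe_add, ← EReal.coe_add]

lemma Ffun_g1_ne_bot :
    (∑ y, ∑ a, klTerm (pYA PX PW PT y a) (QA a)) ≠ (⊥ : EReal) :=
  esum_ne_bot _ _ fun y _ => esum_ne_bot _ _ fun c _ => klTerm_ne_bot _ _

lemma Ffun_g3_ne_bot (hPXpos : ∀ x, 0 < PX x) :
    (∑ x, ((PX x : ℝ) : EReal) * ∑ t, ∑ y, klTerm (pYTgivenX PW PT x y t) (QTY (t, y)))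
      ≠ (⊥ : EReal) :=
  esum_ne_bot _ _ fun x _ => coe_mul_ne_bot (hPXpos x)
    (esum_ne_bot _ _ fun t _ => esum_ne_bot _ _ fun y _ => klTerm_ne_bot _ _)

lemma Ffun_ne_bot (hPXpos : ∀ x, 0 < PX x) :
    Ffun PX PW dist cost s m PT QTY QA ≠ ⊥ := by
  unfold Ffun
  simp only [Ne, EReal.add_eq_bot_iff]
  push_neg
  exact ⟨⟨⟨Ffun_g1_ne_bot, EReal.coe_ne_bot _⟩, Ffun_g3_ne_bot hPXpos⟩, EReal.coe_ne_bot _⟩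

lemma Ffun_conds (hPXpos : ∀ x, 0 < PX x)
    (h : Ffun PX PW dist cost s m PT QTY QA ≠ ⊤) :
    (∀ y c, pYA PX PW PT y c ≠ 0 → QA c ≠ 0) ∧
      (∀ x y t, pYTgivenX PW PT x y t ≠ 0 → QTY (t, y) ≠ 0) := by
  unfold Ffun at h
  have s1 := add_parts_ne_top h
    (by
      rw [Ne, EReal.add_eq_bot_iff]
      push_neg
      exact ⟨by
        rw [Ne, EReal.add_eq_bot_iff]
        push_neg
        exact ⟨Ffun_g1_ne_bot, EReal.coe_ne_bot _⟩, Ffun_g3_ne_bot hPXpos⟩)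
    (EReal.coe_ne_bot _)
  have s2 := add_parts_ne_top s1.1
    (by
      rw [Ne, EReal.add_eq_bot_iff]
      push_neg
      exact ⟨Ffun_g1_ne_bot, EReal.coe_ne_bot _⟩)
    (Ffun_g3_ne_bot hPXpos)
  have s3 := add_parts_ne_top s2.1 Ffun_g1_ne_bot (EReal.coe_ne_bot _)
  constructor
  · intro y c
    have h1 := esum_ne_top _ _ (fun y _ => esum_ne_bot _ _ fun c _ => klTerm_ne_bot _ _)
      s3.1 y (Finset.mem_univ y)
    have h2 := esum_ne_top _ _ (fun c _ => klTerm_ne_bot _ _) h1 c (Finset.mem_univ c)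
    exact klTerm_cond h2
  · intro x y t
    have h1 := esum_ne_top _ _
      (fun x _ => coe_mul_ne_bot (hPXpos x)
        (esum_ne_bot _ _ fun t _ => esum_ne_bot _ _ fun y _ => klTerm_ne_bot _ _))
      s2.2 x (Finset.mem_univ x)
    have hS : (∑ t, ∑ y, klTerm (pYTgivenX PW PT x y t) (QTY (t, y))) ≠ (⊤ : EReal) := by
      intro hS
      rw [hS, EReal.coe_mul_top_of_pos (hPXpos x)] at h1
      exact h1 rfl
    have h2 := esum_ne_top _ _ (fun t _ => esum_ne_bot _ _ fun y _ => klTerm_ne_bot _ _)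
      hS t (Finset.mem_univ t)
    have h3 := esum_ne_top _ _ (fun y _ => klTerm_ne_bot _ _) h2 y (Finset.mem_univ y)
    exact klTerm_cond h3

lemma pXYT_nonneg (hPX : ∀ x, 0 ≤ PX x) (hPW : ∀ c x y, 0 ≤ PW c x y)
    (hPT : ∀ x t, 0 ≤ PT x t) (x : X) (y : Y) (t : Strat Y Xh A) :
    0 ≤ pXYT PX PW PT x y t :=
  mul_nonneg (mul_nonneg (hPX x) (hPT x t)) (hPW t.2 x y)

lemma pYA_nonneg (hPX : ∀ x, 0 ≤ PX x) (hPW : ∀ c x y, 0 ≤ PW c x y)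
    (hPT : ∀ x t, 0 ≤ PT x t) (y : Y) (c : A) : 0 ≤ pYA PX PW PT y c := by
  refine Finset.sum_nonneg fun x _ => Finset.sum_nonneg fun t _ => ?_
  split_ifs
  · exact pXYT_nonneg hPX hPW hPT x y t
  · exact le_refl 0

variable {PT₁ PT₂ : X → Strat Y Xh A → ℝ} {QTY₁ QTY₂ : Strat Y Xh A × Y → ℝ}
  {QA₁ QA₂ : A → ℝ} {a b : ℝ}

lemma pXYT_mix (x : X) (y : Y) (t : Strat Y Xh A) :
    pXYT PX PW (fun x t => a * PT₁ x t + b * PT₂ x t) x y t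
      = a * pXYT PX PW PT₁ x y t + b * pXYT PX PW PT₂ x y t := by
  simp only [pXYT]; ring

lemma pYA_mix (y : Y) (c : A) :
    pYA PX PW (fun x t => a * PT₁ x t + b * PT₂ x t) y c
      = a * pYA PX PW PT₁ y c + b * pYA PX PW PT₂ y c := by
  unfold pYA
  rw [Finset.mul_sum, Finset.mul_sum, ← Finset.sum_add_distrib]
  refine Finset.sum_congr rfl fun x _ => ?_
  rw [Finset.mul_sum, Finset.mul_sum, ← Finset.sum_add_distrib]
  refine Finset.sum_congr rfl fun t _ => ?_
  rw [pXYT_mix]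
  split_ifs <;> ring

lemma pYTgivenX_mix (x : X) (y : Y) (t : Strat Y Xh A) :
    pYTgivenX PW (fun x t => a * PT₁ x t + b * PT₂ x t) x y t
      = a * pYTgivenX PW PT₁ x y t + b * pYTgivenX PW PT₂ x y t := by
  simp only [pYTgivenX]; ring

lemma expDist_mix :
    expDist PX PW dist (fun x t => a * PT₁ x t + b * PT₂ x t)
      = a * expDist PX PW dist PT₁ + b * expDist PX PW dist PT₂ := by
  unfold expDist
  simp only [pXYT_mix, add_mul, mul_assoc, Finset.sum_add_distrib, Finset.mul_sum]

lemma expCost_mix :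
    expCost PX cost (fun x t => a * PT₁ x t + b * PT₂ x t)
      = a * expCost PX cost PT₁ + b * expCost PX cost PT₂ := by
  unfold expCost
  simp only [mul_add, add_mul, mul_assoc, Finset.sum_add_distrib, Finset.mul_sum]
  congr 1 <;> · refine Finset.sum_congr rfl fun x _ => Finset.sum_congr rfl fun t _ => by ring

lemma FfunR_convex (ha : 0 ≤ a) (hb : 0 ≤ b)
    (hPX : ∀ x, 0 ≤ PX x) (hPW : ∀ c x y, 0 ≤ PW c x y)
    (hPT₁ : ∀ x t, 0 ≤ PT₁ x t) (hPT₂ : ∀ x t, 0 ≤ PT₂ x t)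
    (hQA₁ : ∀ c, 0 ≤ QA₁ c) (hQA₂ : ∀ c, 0 ≤ QA₂ c)
    (hQTY₁ : ∀ p, 0 ≤ QTY₁ p) (hQTY₂ : ∀ p, 0 ≤ QTY₂ p)
    (c1 : ∀ y c, pYA PX PW PT₁ y c ≠ 0 → QA₁ c ≠ 0)
    (c2 : ∀ y c, pYA PX PW PT₂ y c ≠ 0 → QA₂ c ≠ 0)
    (d1 : ∀ x y t, pYTgivenX PW PT₁ x y t ≠ 0 → QTY₁ (t, y) ≠ 0)
    (d2 : ∀ x y t, pYTgivenX PW PT₂ x y t ≠ 0 → QTY₂ (t, y) ≠ 0) :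
    FfunR PX PW dist cost s m (fun x t => a * PT₁ x t + b * PT₂ x t)
        (fun p => a * QTY₁ p + b * QTY₂ p) (fun c => a * QA₁ c + b * QA₂ c)
      ≤ a * FfunR PX PW dist cost s m PT₁ QTY₁ QA₁
        + b * FfunR PX PW dist cost s m PT₂ QTY₂ QA₂ := by
  have G1 : (∑ y, ∑ c, klReal (pYA PX PW (fun x t => a * PT₁ x t + b * PT₂ x t) y c)
        (a * QA₁ c + b * QA₂ c))
      ≤ a * (∑ y, ∑ c, klReal (pYA PX PW PT₁ y c) (QA₁ c))
        + b * (∑ y, ∑ c, klReal (pYA PX PW PT₂ y c) (QA₂ c)) := by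
    rw [Finset.mul_sum, Finset.mul_sum, ← Finset.sum_add_distrib]
    refine Finset.sum_le_sum fun y _ => ?_
    rw [Finset.mul_sum, Finset.mul_sum, ← Finset.sum_add_distrib]
    refine Finset.sum_le_sum fun c _ => ?_
    rw [pYA_mix]
    exact klReal_combo ha hb (pYA_nonneg hPX hPW hPT₁ y c) (pYA_nonneg hPX hPW hPT₂ y c)
      (hQA₁ c) (hQA₂ c) (c1 y c) (c2 y c)
  have G2 : (∑ x, ∑ y, ∑ t, pXYT PX PW (fun x t => a * PT₁ x t + b * PT₂ x t) x y t
        * Real.logb 2 (PW t.2 x y))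
      = a * (∑ x, ∑ y, ∑ t, pXYT PX PW PT₁ x y t * Real.logb 2 (PW t.2 x y))
        + b * (∑ x, ∑ y, ∑ t, pXYT PX PW PT₂ x y t * Real.logb 2 (PW t.2 x y)) := by
    simp only [pXYT_mix, add_mul, mul_assoc, Finset.sum_add_distrib, Finset.mul_sum]
  have G3 : (∑ x, PX x * ∑ t, ∑ y,
        klReal (pYTgivenX PW (fun x t => a * PT₁ x t + b * PT₂ x t) x y t)
          (a * QTY₁ (t, y) + b * QTY₂ (t, y)))
      ≤ a * (∑ x, PX x * ∑ t, ∑ y, klReal (pYTgivenX PW PT₁ x y t) (QTY₁ (t, y)))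
        + b * (∑ x, PX x * ∑ t, ∑ y, klReal (pYTgivenX PW PT₂ x y t) (QTY₂ (t, y))) := by
    rw [Finset.mul_sum, Finset.mul_sum, ← Finset.sum_add_distrib]
    refine Finset.sum_le_sum fun x _ => ?_
    have inner : (∑ t, ∑ y,
          klReal (pYTgivenX PW (fun x t => a * PT₁ x t + b * PT₂ x t) x y t)
            (a * QTY₁ (t, y) + b * QTY₂ (t, y)))
        ≤ a * (∑ t, ∑ y, klReal (pYTgivenX PW PT₁ x y t) (QTY₁ (t, y)))
          + b * (∑ t, ∑ y, klReal (pYTgivenX PW PT₂ x y t) (QTY₂ (t, y))) := by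
      rw [Finset.mul_sum, Finset.mul_sum, ← Finset.sum_add_distrib]
      refine Finset.sum_le_sum fun t _ => ?_
      rw [Finset.mul_sum, Finset.mul_sum, ← Finset.sum_add_distrib]
      refine Finset.sum_le_sum fun y _ => ?_
      rw [pYTgivenX_mix]
      exact klReal_combo ha hb
        (mul_nonneg (hPT₁ x t) (hPW t.2 x y)) (mul_nonneg (hPT₂ x t) (hPW t.2 x y))
        (hQTY₁ (t, y)) (hQTY₂ (t, y)) (d1 x y t) (d2 x y t)
    calc PX x * _ ≤ PX x * (a * (∑ t, ∑ y, klReal (pYTgivenX PW PT₁ x y t) (QTY₁ (t, y)))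
          + b * (∑ t, ∑ y, klReal (pYTgivenX PW PT₂ x y t) (QTY₂ (t, y)))) :=
        mul_le_mul_of_nonneg_left inner (hPX x)
      _ = _ := by ring
  have G4 : (- s * expDist PX PW dist (fun x t => a * PT₁ x t + b * PT₂ x t)
        - m * expCost PX cost (fun x t => a * PT₁ x t + b * PT₂ x t))
      = a * (- s * expDist PX PW dist PT₁ - m * expCost PX cost PT₁)
        + b * (- s * expDist PX PW dist PT₂ - m * expCost PX cost PT₂) := by
    rw [expDist_mix, expCost_mix]; ring
  unfold FfunR
  rw [G2, G4]
  linarith [G1, G3]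

end Aux
/-- For any `s ≤ 0` and `m ≤ 0`, the functional
`F(P_{T|X}, Q_{T,Y}, Q_A)` is jointly convex over the product of the convex set of
conditional pmfs `P_{T|X}`, the simplex of pmfs `Q_{T,Y}` on `T × Y`, and the simplex of
pmfs `Q_A` on `A`. -/
theorem Ffun_jointly_convex
    {X Y A Xh : Type} [Fintype X] [Fintype Y] [Fintype A] [Fintype Xh]
    [DecidableEq X] [DecidableEq Y] [DecidableEq A] [DecidableEq Xh]
    [Nonempty X] [Nonempty Y] [Nonempty A] [Nonempty Xh]
    (PX : X → ℝ) (PW : A → X → Y → ℝ) (dist : X → Xh → ℝ) (cost : A → ℝ)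
    (hPX : IsPMF PX) (hPXpos : ∀ x, 0 < PX x)
    (hPW : ∀ a x, IsPMF (PW a x))
    (hdist : ∀ x xh, 0 ≤ dist x xh) (hdist0 : ∀ x, ∃ xh, dist x xh = 0)
    (hcost : ∀ a, 0 ≤ cost a) (hcost0 : ∃ a, cost a = 0)
    (s m : ℝ) (hs : s ≤ 0) (hm : m ≤ 0) :
    ∀ z₁ z₂ : (X → Strat Y Xh A → ℝ) × ((Strat Y Xh A × Y) → ℝ) × (A → ℝ),
      IsCondPMF z₁.1 → IsPMF z₁.2.1 → IsPMF z₁.2.2 →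
      IsCondPMF z₂.1 → IsPMF z₂.2.1 → IsPMF z₂.2.2 →
      ∀ a b : ℝ, 0 ≤ a → 0 ≤ b → a + b = 1 →
        Ffun PX PW dist cost s m (a • z₁ + b • z₂).1 (a • z₁ + b • z₂).2.1
            (a • z₁ + b • z₂).2.2 ≤
          ((a : ℝ) : EReal) * Ffun PX PW dist cost s m z₁.1 z₁.2.1 z₁.2.2 +
          ((b : ℝ) : EReal) * Ffun PX PW dist cost s m z₂.1 z₂.2.1 z₂.2.2 := by
  intro z₁ z₂ hPT1 hQTY1 hQA1 hPT2 hQTY2 hQA2 a b ha hb hab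
  have hfst : (a • z₁ + b • z₂).1 = fun x t => a * z₁.1 x t + b * z₂.1 x t := by
    funext x t
    simp [Prod.fst_add, Prod.smul_fst, Pi.add_apply, Pi.smul_apply, smul_eq_mul]
  have hsnd1 : (a • z₁ + b • z₂).2.1 = fun p => a * z₁.2.1 p + b * z₂.2.1 p := by
    funext p
    simp [Prod.snd_add, Prod.smul_snd, Pi.add_apply, Pi.smul_apply, smul_eq_mul]
  have hsnd2 : (a • z₁ + b • z₂).2.2 = fun c => a * z₁.2.2 c + b * z₂.2.2 c := by
    funext c
    simp [Prod.snd_add, Prod.smul_snd, Pi.add_apply, Pi.smul_apply, smul_eq_mul]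
  rw [hfst, hsnd1, hsnd2]
  rcases ha.eq_or_lt with rfl | ha'
  · have hb1 : b = 1 := by linarith
    subst hb1
    simp only [zero_mul, one_mul, zero_add, EReal.coe_zero, EReal.coe_one]
    exact le_refl _
  rcases hb.eq_or_lt with rfl | hb'
  · have ha1 : a = 1 := by linarith
    subst ha1
    simp only [zero_mul, one_mul, add_zero, EReal.coe_zero, EReal.coe_one]
    exact le_refl _
  have hPXn : ∀ x, 0 ≤ PX x := fun x => (hPXpos x).le
  have hPWn : ∀ c x y, 0 ≤ PW c x y := fun c x y => (hPW c x).1 y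
  have hbot1 : Ffun PX PW dist cost s m z₁.1 z₁.2.1 z₁.2.2 ≠ ⊥ := Ffun_ne_bot hPXpos
  have hbot2 : Ffun PX PW dist cost s m z₂.1 z₂.2.1 z₂.2.2 ≠ ⊥ := Ffun_ne_bot hPXpos
  by_cases ht1 : Ffun PX PW dist cost s m z₁.1 z₁.2.1 z₁.2.2 = ⊤
  · rw [ht1, EReal.coe_mul_top_of_pos ha',
      EReal.top_add_of_ne_bot (coe_mul_ne_bot hb' hbot2)]
    exact le_top
  by_cases ht2 : Ffun PX PW dist cost s m z₂.1 z₂.2.1 z₂.2.2 = ⊤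
  · rw [ht2, EReal.coe_mul_top_of_pos hb',
      EReal.add_top_of_ne_bot (coe_mul_ne_bot ha' hbot1)]
    exact le_top
  obtain ⟨c1, d1⟩ := Ffun_conds hPXpos ht1
  obtain ⟨c2, d2⟩ := Ffun_conds hPXpos ht2
  have cmix : ∀ y c, pYA PX PW (fun x t => a * z₁.1 x t + b * z₂.1 x t) y c ≠ 0 →
      (fun c => a * z₁.2.2 c + b * z₂.2.2 c) c ≠ 0 := by
    intro y c h
    rw [pYA_mix] at h
    have h1 : pYA PX PW z₁.1 y c ≠ 0 ∨ pYA PX PW z₂.1 y c ≠ 0 := by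
      by_contra hc
      push_neg at hc
      rw [hc.1, hc.2] at h
      simp at h
    rcases h1 with h1 | h1
    · have hq : 0 < z₁.2.2 c := lt_of_le_of_ne (hQA1.1 c) (Ne.symm (c1 y c h1))
      exact ne_of_gt (add_pos_of_pos_of_nonneg (mul_pos ha' hq)
        (mul_nonneg hb (hQA2.1 c)))
    · have hq : 0 < z₂.2.2 c := lt_of_le_of_ne (hQA2.1 c) (Ne.symm (c2 y c h1))
      exact ne_of_gt (add_pos_of_nonneg_of_pos (mul_nonneg ha (hQA1.1 c))
        (mul_pos hb' hq))
  have dmix : ∀ x y t, pYTgivenX PW (fun x t => a * z₁.1 x t + b * z₂.1 x t) x y t ≠ 0 →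
      (fun p => a * z₁.2.1 p + b * z₂.2.1 p) (t, y) ≠ 0 := by
    intro x y t h
    rw [pYTgivenX_mix] at h
    have h1 : pYTgivenX PW z₁.1 x y t ≠ 0 ∨ pYTgivenX PW z₂.1 x y t ≠ 0 := by
      by_contra hc
      push_neg at hc
      rw [hc.1, hc.2] at h
      simp at h
    rcases h1 with h1 | h1
    · have hq : 0 < z₁.2.1 (t, y) := lt_of_le_of_ne (hQTY1.1 (t, y)) (Ne.symm (d1 x y t h1))
      exact ne_of_gt (add_pos_of_pos_of_nonneg (mul_pos ha' hq)
        (mul_nonneg hb (hQTY2.1 (t, y))))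
    · have hq : 0 < z₂.2.1 (t, y) := lt_of_le_of_ne (hQTY2.1 (t, y)) (Ne.symm (d2 x y t h1))
      exact ne_of_gt (add_pos_of_nonneg_of_pos (mul_nonneg ha (hQTY1.1 (t, y)))
        (mul_pos hb' hq))
  rw [Ffun_eq_coe cmix dmix, Ffun_eq_coe c1 d1, Ffun_eq_coe c2 d2,
    ← EReal.coe_mul, ← EReal.coe_mul, ← EReal.coe_add, EReal.coe_le_coe_iff]
  exact FfunR_convex ha hb hPXn hPWn (fun x t => (hPT1 x).1 t) (fun x t => (hPT2 x).1 t)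
    hQA1.1 hQA2.1 hQTY1.1 hQTY2.1 c1 c2 d1 d2
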